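/- Let N ≥ 9 be an odd natural number and define θ : Fin N → ℝ by θ_i = 2π·i/(N+1). Then for all pairwise distinct indices i, j, l in Fin N, cos(2(θ_i − θ_j)) + cos(2(θ_j − θ_l)) + cos(2(θ_i − θ_l)) ≤ 1 + 2·cos(4π/(N+1)), and this bound is attained by some triple of distinct indices. -/

import Mathlib

open Real

lemma cos_le_aux (M : ℕ) (hM : 5 ≤ M) (r : ℝ) (h1 : 1 ≤ r) (h2 : r ≤ (M:ℝ) - 1) :
    Real.cos (2 * π * r / M) ≤ Real.cos (2 * π / M) := by
  have hpi := Real.pi_pos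
  have hM5 : (5:ℝ) ≤ M := by exact_mod_cast hM
  have hMpos : (0:ℝ) < M := by linarith
  rcases le_or_gt r ((M:ℝ)/2) with hr | hr
  · apply Real.cos_le_cos_of_nonneg_of_le_pi
    · positivity
    · rw [div_le_iff₀ hMpos]; nlinarith
    · rw [div_le_div_iff₀ hMpos hMpos]
      nlinarith [mul_nonneg (mul_nonneg (by linarith : (0:ℝ) ≤ 2*π) (by linarith : (0:ℝ) ≤ r - 1)) hMpos.le]
  · have hcos : Real.cos (2*π*r/M) = Real.cos (2*π*((M:ℝ) - r)/M) := by
      have h2pi : 2*π*((M:ℝ)-r)/M = 2*π - 2*π*r/M := by field_simp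
      rw [h2pi, Real.cos_sub, Real.cos_two_pi, Real.sin_two_pi]; ring
    rw [hcos]
    apply Real.cos_le_cos_of_nonneg_of_le_pi
    · positivity
    · rw [div_le_iff₀ hMpos]; nlinarith
    · rw [div_le_div_iff₀ hMpos hMpos]
      nlinarith [mul_nonneg (mul_nonneg (by linarith : (0:ℝ) ≤ 2*π) (by linarith : (0:ℝ) ≤ ((M:ℝ) - r) - 1)) hMpos.le]

lemma cos_int_le (M : ℕ) (hM : 5 ≤ M) (k : ℤ) (hk : ¬ (M:ℤ) ∣ k) :
    Real.cos (2 * π * (k:ℝ) / M) ≤ Real.cos (2 * π / M) := by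
  have hMpos : (0:ℤ) < (M:ℤ) := by omega
  have hMR : (0:ℝ) < M := by exact_mod_cast hMpos
  set r := k % (M:ℤ) with hrdef
  have hr0 : 0 ≤ r := Int.emod_nonneg k (by omega)
  have hrM : r < M := Int.emod_lt_of_pos k hMpos
  have hrne : r ≠ 0 := fun h => hk (Int.dvd_of_emod_eq_zero h)
  have hk_eq : k = (M:ℤ) * (k / M) + r := (Int.mul_ediv_add_emod k M).symm
  have hkR : (k:ℝ) = (M:ℝ) * ((k / (M:ℤ) : ℤ) : ℝ) + (r:ℝ) := by exact_mod_cast hk_eq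
  have hangle : 2*π*(k:ℝ)/M = 2*π*(r:ℝ)/M + ((k / (M:ℤ) : ℤ):ℝ) * (2*π) := by
    rw [hkR]; field_simp; ring
  rw [hangle, Real.cos_add_int_mul_two_pi]
  apply cos_le_aux M hM
  · have : (1:ℤ) ≤ r := by omega
    exact_mod_cast this
  · have : r ≤ (M:ℤ) - 1 := by omega
    calc (r:ℝ) ≤ ((M:ℤ) - 1 : ℤ) := by exact_mod_cast this
    _ = (M:ℝ) - 1 := by push_cast; ring

lemma eq_pm (M a : ℤ) (hM : 0 < M) (ha : M ∣ a) (h0 : a ≠ 0)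
    (hlt : -(2*M) < a) (hlt2 : a < 2*M) : a = M ∨ a = -M := by
  obtain ⟨q, hq⟩ := ha
  have hq2 : q < 2 := by
    by_contra h
    push_neg at h
    nlinarith
  have hq2' : -2 < q := by
    by_contra h
    push_neg at h
    nlinarith
  have hq0 : q ≠ 0 := by rintro rfl; simp at hq; exact h0 hq
  interval_cases q <;> simp [hq] <;> omega

theorem stmt_17 (N : ℕ) (hN : 9 ≤ N) (hNodd : Odd N) (θ : Fin N → ℝ)
    (hθ : ∀ i : Fin N, θ i = 2 * Real.pi * (i : ℕ) / (N + 1)) :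
    (∀ i j l : Fin N, i ≠ j → i ≠ l → j ≠ l →
      Real.cos (2 * (θ i - θ j)) + Real.cos (2 * (θ j - θ l)) +
        Real.cos (2 * (θ i - θ l)) ≤ 1 + 2 * Real.cos (4 * Real.pi / (N + 1))) ∧
    (∃ i j l : Fin N, i ≠ j ∧ i ≠ l ∧ j ≠ l ∧
      Real.cos (2 * (θ i - θ j)) + Real.cos (2 * (θ j - θ l)) +
        Real.cos (2 * (θ i - θ l)) = 1 + 2 * Real.cos (4 * Real.pi / (N + 1))) := by
  obtain ⟨m, hm⟩ := hNodd
  obtain ⟨M, hNM⟩ : ∃ M : ℕ, N + 1 = 2 * M := ⟨m + 1, by omega⟩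
  have hM5 : 5 ≤ M := by omega
  have hpi := Real.pi_pos
  have hMR : (N:ℝ) + 1 = 2 * M := by exact_mod_cast hNM
  have hMpos : (0:ℝ) < M := by
    have : (5:ℝ) ≤ M := by exact_mod_cast hM5
    linarith
  have hrhs : 4 * π / ((N:ℝ) + 1) = 2 * π / M := by
    rw [hMR]; field_simp; ring
  have hterm : ∀ i j : Fin N, 2 * (θ i - θ j) = 2 * π * ((((i:ℤ) - (j:ℤ)):ℤ):ℝ) / M := by
    intro i j
    rw [hθ i, hθ j, hMR]
    push_cast
    field_simp
  constructor
  · intro i j l hij hil hjl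
    rw [hterm i j, hterm j l, hterm i l, hrhs]
    set a : ℤ := (i:ℤ) - (j:ℤ) with hadef
    set b : ℤ := (j:ℤ) - (l:ℤ) with hbdef
    set c : ℤ := (i:ℤ) - (l:ℤ) with hcdef
    have hc : c = a + b := by omega
    have hi := i.isLt
    have hj := j.isLt
    have hl := l.isLt
    have hijv : (i:ℕ) ≠ (j:ℕ) := fun h => hij (Fin.ext h)
    have hilv : (i:ℕ) ≠ (l:ℕ) := fun h => hil (Fin.ext h)
    have hjlv : (j:ℕ) ≠ (l:ℕ) := fun h => hjl (Fin.ext h)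
    have ha0 : a ≠ 0 := by omega
    have hb0 : b ≠ 0 := by omega
    have hc0 : c ≠ 0 := by omega
    have haB : -(2*(M:ℤ)) < a ∧ a < 2*M := by omega
    have hbB : -(2*(M:ℤ)) < b ∧ b < 2*M := by omega
    have hcB : -(2*(M:ℤ)) < c ∧ c < 2*M := by omega
    have hMZ : (0:ℤ) < M := by omega
    have hnot2 : ¬ ((M:ℤ) ∣ a ∧ (M:ℤ) ∣ b) := by
      rintro ⟨h1, h2⟩
      have ha' := eq_pm (M:ℤ) a hMZ h1 ha0 haB.1 haB.2
      have hb' := eq_pm (M:ℤ) b hMZ h2 hb0 hbB.1 hbB.2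
      omega
    by_cases hda : (M:ℤ) ∣ a
    · have hdb : ¬ (M:ℤ) ∣ b := fun h => hnot2 ⟨hda, h⟩
      have hdc : ¬ (M:ℤ) ∣ c := fun h => hnot2 ⟨hda, by
        have : b = c - a := by omega
        rw [this]; exact dvd_sub h hda⟩
      linarith [Real.cos_le_one (2*π*((a:ℤ):ℝ)/M), cos_int_le M hM5 b hdb,
        cos_int_le M hM5 c hdc]
    · by_cases hdb : (M:ℤ) ∣ b
      · have hdc : ¬ (M:ℤ) ∣ c := fun h => hda (by
          have : a = c - b := by omega
          rw [this]; exact dvd_sub h hdb)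
        linarith [Real.cos_le_one (2*π*((b:ℤ):ℝ)/M), cos_int_le M hM5 a hda,
          cos_int_le M hM5 c hdc]
      · by_cases hdc : (M:ℤ) ∣ c
        · linarith [Real.cos_le_one (2*π*((c:ℤ):ℝ)/M), cos_int_le M hM5 a hda,
            cos_int_le M hM5 b hdb]
        · linarith [Real.cos_le_one (2*π/(M:ℝ)), cos_int_le M hM5 a hda,
            cos_int_le M hM5 b hdb, cos_int_le M hM5 c hdc]
  · have h0N : 0 < N := by omega
    have hMN : M < N := by omega
    have hM1N : M - 1 < N := by omega
    refine ⟨⟨0, h0N⟩, ⟨M, hMN⟩, ⟨M-1, hM1N⟩, ?_, ?_, ?_, ?_⟩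
    · simp only [ne_eq, Fin.mk.injEq]; omega
    · simp only [ne_eq, Fin.mk.injEq]; omega
    · simp only [ne_eq, Fin.mk.injEq]; omega
    · rw [hterm, hterm, hterm, hrhs]
      have hv1 : (((⟨0, h0N⟩ : Fin N):ℤ)) = 0 := by simp
      have hv2 : (((⟨M, hMN⟩ : Fin N):ℤ)) = (M:ℤ) := by simp
      have hv3 : (((⟨M-1, hM1N⟩ : Fin N):ℤ)) = (M:ℤ) - 1 := by
        simp; omega
      rw [hv1, hv2, hv3]
      have e1 : 2*π*(((0 - (M:ℤ)):ℤ):ℝ)/M = -(2*π) := by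
        push_cast
        rw [div_eq_iff hMpos.ne']
        ring
      have e2 : 2*π*((((M:ℤ) - ((M:ℤ)-1)):ℤ):ℝ)/M = 2*π/M := by
        push_cast; ring
      have e3 : 2*π*(((0 - ((M:ℤ)-1)):ℤ):ℝ)/M = 2*π/M - 2*π := by
        push_cast
        rw [div_eq_iff hMpos.ne', sub_mul, div_mul_cancel₀ _ hMpos.ne']
        ring
      rw [e1, e2, e3, Real.cos_neg, Real.cos_two_pi, Real.cos_sub_two_pi]
      ring
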